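/- arXiv:1504.06711 — 4 statements merged into one kernel-verified Lean document; each statement's English description precedes it below -/
import Mathlib

section
/- Let a∞, b∞, c∞ > 0 satisfy a∞^α b∞^β = c∞^γ, γa∞² + αc∞² = M1 and γb∞² + βc∞² = M2. If a, b, c ≥ 0 satisfy γa² + αc² = M1 and γb² + βc² = M2, then there exists a constant C = C(α,β,γ,M1,M2) > 0 (independent of a,b,c) such that (a−a∞)² + (b−b∞)² + (c−c∞)² ≤ C·(a^α b^β − c^γ)². -/
open Real

set_option maxHeartbeats 1000000

private lemma aux_mono (γ α x xinf c cinf : ℝ) (hγ0 : 0 < γ) (hα0 : 0 < α)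
    (hx : 0 ≤ x) (hxinf : 0 < xinf) (hc : 0 ≤ cinf) (hle : cinf ≤ c)
    (hrel : γ * (x^2 - xinf^2) = α * (cinf^2 - c^2)) : x ≤ xinf := by
  nlinarith [mul_nonneg (mul_nonneg hα0.le (sub_nonneg.2 hle))
      (show (0:ℝ) ≤ c + cinf by linarith),
    mul_pos hγ0 (show (0:ℝ) < x + xinf by linarith)]

private lemma aux_mono' (γ α x xinf c cinf : ℝ) (hγ0 : 0 < γ) (hα0 : 0 < α)
    (hx : 0 ≤ x) (hxinf : 0 < xinf) (hc : 0 ≤ c) (hle : c ≤ cinf)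
    (hrel : γ * (x^2 - xinf^2) = α * (cinf^2 - c^2)) : xinf ≤ x := by
  nlinarith [mul_nonneg (mul_nonneg hα0.le (sub_nonneg.2 hle))
      (show (0:ℝ) ≤ c + cinf by linarith),
    mul_pos hγ0 (show (0:ℝ) < x + xinf by linarith)]

private lemma aux_est (γ α T x xinf c cinf : ℝ) (hγ0 : 0 < γ) (hα0 : 0 < α)
    (hx : 0 ≤ x) (hxinf : 0 < xinf) (hc : 0 ≤ c) (hcinf : 0 < cinf)
    (hcT : c ≤ T) (hcinfT : cinf ≤ T)
    (hrel : γ * (x^2 - xinf^2) = α * (cinf^2 - c^2)) :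
    (x - xinf)^2 * (γ * xinf)^2 ≤ (α * (2*T))^2 * (c - cinf)^2 := by
  have e1 : (x - xinf)^2 * (γ * xinf)^2 ≤ (x - xinf)^2 * (γ * (x + xinf))^2 := by
    apply mul_le_mul_of_nonneg_left _ (sq_nonneg _)
    have e1' : xinf^2 ≤ (x + xinf)^2 := by
      linarith [mul_nonneg hx hxinf.le, sq_nonneg x]
    calc (γ * xinf)^2 = γ^2 * xinf^2 := by ring
      _ ≤ γ^2 * (x + xinf)^2 := mul_le_mul_of_nonneg_left e1' (sq_nonneg γ)
      _ = (γ * (x + xinf))^2 := by ring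
  have e2 : (x - xinf)^2 * (γ * (x + xinf))^2 = (c - cinf)^2 * (α * (c + cinf))^2 := by
    linear_combination (γ*(x^2 - xinf^2) + α*(cinf^2 - c^2)) * hrel
  have e3 : (c - cinf)^2 * (α * (c + cinf))^2 ≤ (c - cinf)^2 * (α * (2*T))^2 := by
    apply mul_le_mul_of_nonneg_left _ (sq_nonneg _)
    have e3' : (c + cinf)^2 ≤ (2*T)^2 :=
      pow_le_pow_left₀ (by linarith) (by linarith) 2
    calc (α * (c + cinf))^2 = α^2 * (c + cinf)^2 := by ring
      _ ≤ α^2 * (2*T)^2 := mul_le_mul_of_nonneg_left e3' (sq_nonneg α)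
      _ = (α * (2*T))^2 := by ring
  calc (x - xinf)^2 * (γ * xinf)^2 ≤ (c - cinf)^2 * (α * (2*T))^2 := by linarith
    _ = (α * (2*T))^2 * (c - cinf)^2 := by ring

private lemma aux_lin (S γ α x xinf c cinf : ℝ) (hγ0 : 0 < γ) (hα0 : 0 < α)
    (hc : 0 ≤ c) (hle : c ≤ cinf) (hxx : xinf ≤ x) (hxS : x ≤ S) (hxinfS : xinf ≤ S)
    (hrel : γ * (x^2 - xinf^2) = α * (cinf^2 - c^2)) :
    α * cinf * (cinf - c) ≤ γ * (x - xinf) * (2 * S) := by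
  have h1 : 0 ≤ γ * (x - xinf) * (2*S - (x + xinf)) :=
    mul_nonneg (mul_nonneg hγ0.le (sub_nonneg.2 hxx)) (by linarith)
  have h2 : 0 ≤ α * (cinf - c) * c :=
    mul_nonneg (mul_nonneg hα0.le (sub_nonneg.2 hle)) hc
  nlinarith [h1, h2]

private lemma aux_k1 (P S γ α x xinf c cinf : ℝ) (hP : 0 < P) (hγ0 : 0 < γ)
    (hα0 : 0 < α) (hxinf : 0 < xinf) (hS : 0 < S)
    (hlin : α * cinf * (cinf - c) ≤ γ * (x - xinf) * (2 * S)) :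
    P * α * (α * cinf) / (xinf * (γ * (2 * S))) * (cinf - c) ≤ P * (α * ((x - xinf)/xinf)) := by
  have e : P * (α * ((x - xinf)/xinf)) = (P * α * (x - xinf)) / xinf := by ring
  rw [div_mul_eq_mul_div, e, div_le_div_iff₀ (by positivity) hxinf]
  have hF := mul_le_mul_of_nonneg_left hlin (by positivity : (0:ℝ) ≤ P * α * xinf)
  nlinarith [hF]

theorem stmt_1 (α β γ M1 M2 ainf binf cinf : ℝ)
    (hα : 1 ≤ α) (hβ : 1 ≤ β) (hγ : 1 ≤ γ) (hM1 : 0 < M1) (hM2 : 0 < M2)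
    (hainf : 0 < ainf) (hbinf : 0 < binf) (hcinf : 0 < cinf)
    (heq : ainf ^ α * binf ^ β = cinf ^ γ)
    (hcons1 : γ * ainf ^ 2 + α * cinf ^ 2 = M1)
    (hcons2 : γ * binf ^ 2 + β * cinf ^ 2 = M2) :
    ∃ C : ℝ, 0 < C ∧ ∀ a b c : ℝ, 0 ≤ a → 0 ≤ b → 0 ≤ c →
      γ * a ^ 2 + α * c ^ 2 = M1 → γ * b ^ 2 + β * c ^ 2 = M2 →
      (a - ainf) ^ 2 + (b - binf) ^ 2 + (c - cinf) ^ 2 ≤ C * (a ^ α * b ^ β - c ^ γ) ^ 2 := by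
  have hγ0 : (0:ℝ) < γ := lt_of_lt_of_le one_pos hγ
  have hα0 : (0:ℝ) < α := lt_of_lt_of_le one_pos hα
  have hβ0 : (0:ℝ) < β := lt_of_lt_of_le one_pos hβ
  set S1 := Real.sqrt (M1/γ) with hS1def
  set T1 := Real.sqrt (M1/α) with hT1def
  set T2 := Real.sqrt (M2/β) with hT2def
  have hS1pos : 0 < S1 := Real.sqrt_pos.mpr (by positivity)
  have hT1pos : 0 < T1 := Real.sqrt_pos.mpr (by positivity)
  have hT2pos : 0 < T2 := Real.sqrt_pos.mpr (by positivity)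
  have hcg : 0 < cinf ^ γ := Real.rpow_pos_of_pos hcinf γ
  -- generic bound lemma: x ≥ 0, u * x^2 ≤ M  →  x ≤ sqrt (M/u)
  have sqrt_bound : ∀ x u M : ℝ, 0 ≤ x → 0 < u → u * x^2 ≤ M → x ≤ Real.sqrt (M/u) := by
    intro x u M hx hu hxu
    rw [show x = Real.sqrt (x^2) by rw [Real.sqrt_sq hx]]
    exact Real.sqrt_le_sqrt (by rw [le_div_iff₀ hu]; linarith)
  set k1 := cinf^γ * α * (α * cinf) / (ainf * (γ * (2 * S1))) with hk1def
  have hk1pos : 0 < k1 := by positivity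
  set k2 := γ * cinf^(γ-1) with hk2def
  have hk2pos : 0 < k2 := by positivity
  set k := min k1 k2 with hkdef
  have hkpos : 0 < k := lt_min hk1pos hk2pos
  set Ka := α * (2*T1) / (γ * ainf) with hKadef
  set Kb := β * (2*T2) / (γ * binf) with hKbdef
  set L := 1 + Ka^2 + Kb^2 with hLdef
  have hLpos : 0 < L := by positivity
  refine ⟨L / k^2, by positivity, ?_⟩
  intro a b c ha hb hc h1 h2
  -- a priori bounds
  have hainfS1 : ainf ≤ S1 := sqrt_bound ainf γ M1 hainf.le hγ0
    (by linarith [mul_nonneg hα0.le (sq_nonneg cinf)])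
  have haS1 : a ≤ S1 := sqrt_bound a γ M1 ha hγ0
    (by linarith [mul_nonneg hα0.le (sq_nonneg c)])
  have hcT1 : c ≤ T1 := sqrt_bound c α M1 hc hα0
    (by linarith [mul_nonneg hγ0.le (sq_nonneg a)])
  have hcinfT1 : cinf ≤ T1 := sqrt_bound cinf α M1 hcinf.le hα0
    (by linarith [mul_nonneg hγ0.le (sq_nonneg ainf)])
  have hcT2 : c ≤ T2 := sqrt_bound c β M2 hc hβ0
    (by linarith [mul_nonneg hγ0.le (sq_nonneg b)])
  have hcinfT2 : cinf ≤ T2 := sqrt_bound cinf β M2 hcinf.le hβ0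
    (by linarith [mul_nonneg hγ0.le (sq_nonneg binf)])
  -- conservation law relations
  have hac : γ * (a^2 - ainf^2) = α * (cinf^2 - c^2) := by linarith
  have hbc : γ * (b^2 - binf^2) = β * (cinf^2 - c^2) := by linarith
  -- Lipschitz estimates for a and b in terms of c
  have est_a : (a - ainf)^2 ≤ Ka^2 * (c - cinf)^2 := by
    rw [hKadef, div_pow, div_mul_eq_mul_div, le_div_iff₀ (by positivity)]
    exact aux_est γ α T1 a ainf c cinf hγ0 hα0 ha hainf hc hcinf hcT1 hcinfT1 hac
  have est_b : (b - binf)^2 ≤ Kb^2 * (c - cinf)^2 := by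
    rw [hKbdef, div_pow, div_mul_eq_mul_div, le_div_iff₀ (by positivity)]
    exact aux_est γ β T2 b binf c cinf hγ0 hβ0 hb hbinf hc hcinf hcT2 hcinfT2 hbc
  -- key: k^2 (c-cinf)^2 ≤ (a^α b^β - c^γ)^2
  have key : k^2 * (c - cinf)^2 ≤ (a^α * b^β - c^γ)^2 := by
    rcases le_total cinf c with hle | hle
    · -- c ≥ cinf : a ≤ ainf, b ≤ binf
      have haa : a ≤ ainf := aux_mono γ α a ainf c cinf hγ0 hα0 ha hainf hcinf.le hle hac
      have hbb : b ≤ binf := aux_mono γ β b binf c cinf hγ0 hβ0 hb hbinf hcinf.le hle hbc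
      have hab : a^α * b^β ≤ cinf^γ := by
        rw [← heq]
        exact mul_le_mul (Real.rpow_le_rpow ha haa hα0.le)
          (Real.rpow_le_rpow hb hbb hβ0.le) (Real.rpow_nonneg hb β)
          (Real.rpow_nonneg hainf.le α)
      -- Bernoulli: c^γ ≥ cinf^γ + γ cinf^(γ-1) (c - cinf)
      have hber := one_add_mul_self_le_rpow_one_add
        (s := (c - cinf)/cinf)
        (by linarith [div_nonneg (show (0:ℝ) ≤ c - cinf by linarith) hcinf.le]) hγ
      have h1s : (1 : ℝ) + (c - cinf)/cinf = c / cinf := by field_simp; ring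
      rw [h1s, Real.div_rpow hc hcinf.le] at hber
      have hberm : cinf^γ + k2 * (c - cinf) ≤ c^γ := by
        have hm := mul_le_mul_of_nonneg_right hber hcg.le
        rw [div_mul_cancel₀ _ hcg.ne'] at hm
        have hpow : cinf^(γ-1) = cinf^γ / cinf := Real.rpow_sub_one hcinf.ne' γ
        rw [hk2def, hpow]
        calc cinf^γ + γ * (cinf^γ/cinf) * (c - cinf)
            = (1 + γ * ((c-cinf)/cinf)) * cinf^γ := by field_simp
          _ ≤ c^γ := hm
      have hk2le : k * (c - cinf) ≤ k2 * (c - cinf) :=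
        mul_le_mul_of_nonneg_right (min_le_right _ _) (by linarith)
      have hge : k * (c - cinf) ≤ c^γ - a^α * b^β := by linarith
      have hnn : 0 ≤ k * (c - cinf) := mul_nonneg hkpos.le (by linarith)
      calc k^2 * (c - cinf)^2 = (k * (c - cinf))^2 := by ring
        _ ≤ (c^γ - a^α * b^β)^2 := pow_le_pow_left₀ hnn hge 2
        _ = (a^α * b^β - c^γ)^2 := by ring
    · -- c ≤ cinf : a ≥ ainf, b ≥ binf
      have haa : ainf ≤ a := aux_mono' γ α a ainf c cinf hγ0 hα0 ha hainf hc hle hac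
      have hbb : binf ≤ b := aux_mono' γ β b binf c cinf hγ0 hβ0 hb hbinf hc hle hbc
      have hrb : binf^β ≤ b^β := Real.rpow_le_rpow hbinf.le hbb hβ0.le
      have hrc : c^γ ≤ cinf^γ := Real.rpow_le_rpow hc hle hγ0.le
      set s := (a - ainf)/ainf with hsdef
      have hs0 : 0 ≤ s := by
        rw [hsdef]; apply div_nonneg (by linarith) hainf.le
      have hber := one_add_mul_self_le_rpow_one_add (s := s) (by linarith) hα
      have h1s : (1 : ℝ) + s = a / ainf := by rw [hsdef]; field_simp; ring
      rw [h1s, Real.div_rpow ha hainf.le] at hber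
      have hag : 0 < ainf ^ α := Real.rpow_pos_of_pos hainf α
      have hA : ainf^α * (1 + α * s) ≤ a^α := by
        have hm := mul_le_mul_of_nonneg_right hber hag.le
        rw [div_mul_cancel₀ _ hag.ne'] at hm
        linarith [hm]
      have hφ : cinf^γ * (1 + α * s) ≤ a^α * b^β := by
        calc cinf^γ * (1 + α * s) = (ainf^α * (1 + α * s)) * binf^β := by rw [← heq]; ring
          _ ≤ a^α * b^β := mul_le_mul hA hrb (Real.rpow_nonneg hbinf.le β)
              (Real.rpow_nonneg ha α)
      have hφ2 : cinf^γ * (α * s) ≤ a^α * b^β - c^γ := by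
        have hx : cinf^γ * (1 + α * s) = cinf^γ + cinf^γ * (α * s) := by ring
        rw [hx] at hφ; linarith
      -- a - ainf ≥ α cinf (cinf - c) / (γ * 2 * S1)
      have hlin : α * cinf * (cinf - c) ≤ γ * (a - ainf) * (2 * S1) :=
        aux_lin S1 γ α a ainf c cinf hγ0 hα0 hc hle haa haS1 hainfS1 hac
      have hk1b : k1 * (cinf - c) ≤ cinf^γ * (α * s) := by
        rw [hk1def, hsdef]
        exact aux_k1 (cinf^γ) S1 γ α a ainf c cinf hcg hγ0 hα0 hainf hS1pos hlin
      have hkle : k * (cinf - c) ≤ k1 * (cinf - c) :=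
        mul_le_mul_of_nonneg_right (min_le_left _ _) (by linarith)
      have hge : k * (cinf - c) ≤ a^α * b^β - c^γ := by linarith
      have hnn : 0 ≤ k * (cinf - c) := mul_nonneg hkpos.le (by linarith)
      calc k^2 * (c - cinf)^2 = (k * (cinf - c))^2 := by ring
        _ ≤ (a^α * b^β - c^γ)^2 := pow_le_pow_left₀ hnn hge 2
  -- combine
  have hLHS : (a - ainf)^2 + (b - binf)^2 + (c - cinf)^2 ≤ L * (c - cinf)^2 := by
    rw [hLdef]
    have : (1 + Ka^2 + Kb^2) * (c - cinf)^2
        = Ka^2 * (c-cinf)^2 + Kb^2 * (c-cinf)^2 + (c-cinf)^2 := by ring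
    rw [this]
    linarith [est_a, est_b]
  calc (a - ainf)^2 + (b - binf)^2 + (c - cinf)^2 ≤ L * (c - cinf)^2 := hLHS
    _ = (L / k^2) * (k^2 * (c - cinf)^2) := by
        rw [div_mul_eq_mul_div, mul_comm (k^2) ((c - cinf)^2), ← mul_assoc,
          mul_div_assoc, div_self (by positivity : (k:ℝ)^2 ≠ 0), mul_one]
    _ ≤ (L / k^2) * (a^α * b^β - c^γ)^2 :=
        mul_le_mul_of_nonneg_left key (by positivity)
end

section
/- Let Ω ⊂ ℝ^N be a measurable set with measure 1, and u : Ω → [0,∞) integrable with mean ū = ∫_Ω u. If ū > 0, then ∫_Ω u·ln(u/ū) dx ≥ (1/(2ū))·(∫_Ω |u − ū| dx)². (Cziszar–Kullback–Pinsker inequality for nonnegative functions.) -/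
open MeasureTheory Real

private lemma g_deriv {s : ℝ} (hs : 0 < s) :
    HasDerivAt (fun t : ℝ => (t+1)*Real.log t - 2*(t-1)) (Real.log s + (s+1)*s⁻¹ - 2) s := by
  have h1 : HasDerivAt (fun t : ℝ => (t+1)*Real.log t) (1*Real.log s + (s+1)*s⁻¹) s :=
    ((hasDerivAt_id s).add_const 1).mul (Real.hasDerivAt_log hs.ne')
  have h2 : HasDerivAt (fun t : ℝ => 2*(t-1)) 2 s := by
    simpa using ((hasDerivAt_id s).sub_const 1).const_mul 2
  have h := h1.sub h2
  rw [one_mul] at h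
  exact h

private lemma g_mono : MonotoneOn (fun t : ℝ => (t+1)*Real.log t - 2*(t-1)) (Set.Ioi 0) := by
  apply monotoneOn_of_deriv_nonneg (convex_Ioi 0)
  · apply ContinuousOn.sub
    · exact (continuousOn_id.add continuousOn_const).mul
        (Real.continuousOn_log.mono (fun x hx => ne_of_gt hx))
    · fun_prop
  · rw [interior_Ioi]
    exact fun s hs => (g_deriv hs).differentiableAt.differentiableWithinAt
  · rw [interior_Ioi]
    intro s hs
    rw [(g_deriv hs).deriv]
    have hl := Real.one_sub_inv_le_log_of_pos hs
    have hs' : (0:ℝ) < s := hs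
    have : (s+1)*s⁻¹ = 1 + s⁻¹ := by
      rw [add_mul, mul_inv_cancel₀ hs'.ne', one_mul]
    rw [this]; linarith

private lemma g_sign {s : ℝ} (hs : 0 < s) (h1 : 1 ≤ s) :
    0 ≤ (s+1)*Real.log s - 2*(s-1) := by
  have := g_mono (Set.mem_Ioi.2 one_pos) (Set.mem_Ioi.2 hs) h1
  simpa using this

private lemma g_sign' {s : ℝ} (hs : 0 < s) (h1 : s ≤ 1) :
    (s+1)*Real.log s - 2*(s-1) ≤ 0 := by
  have := g_mono (Set.mem_Ioi.2 hs) (Set.mem_Ioi.2 one_pos) h1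
  simpa using this

private lemma psi_deriv {s : ℝ} (hs : 0 < s) :
    HasDerivAt (fun t : ℝ => (2*t+4)*(t*Real.log t - t + 1) - 3*(t-1)^2)
      (4*((s+1)*Real.log s - 2*(s-1))) s := by
  have hlog : HasDerivAt (fun t : ℝ => t*Real.log t) (1*Real.log s + s*s⁻¹) s :=
    (hasDerivAt_id s).mul (Real.hasDerivAt_log hs.ne')
  have h1 : HasDerivAt (fun t : ℝ => t*Real.log t - t + 1) (1*Real.log s + s*s⁻¹ - 1) s :=
    (hlog.sub (hasDerivAt_id s)).add_const 1
  have h2 : HasDerivAt (fun t : ℝ => 2*t+4) 2 s := by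
    simpa using ((hasDerivAt_id s).const_mul 2).add_const 4
  have h3 : HasDerivAt (fun t : ℝ => (2*t+4)*(t*Real.log t - t + 1))
      (2*(s*Real.log s - s + 1) + (2*s+4)*(1*Real.log s + s*s⁻¹ - 1)) s := h2.mul h1
  have h4 : HasDerivAt (fun t : ℝ => 3*(t-1)^2) (3*(2*(s-1))) s := by
    simpa using (((hasDerivAt_id s).sub_const 1).pow 2).const_mul 3
  have := h3.sub h4
  refine this.congr_deriv ?_
  have hss : s*s⁻¹ = 1 := mul_inv_cancel₀ hs.ne'
  rw [hss]; ring

private lemma key (t : ℝ) (ht : 0 ≤ t) :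
    3*(t-1)^2 ≤ (2*t+4)*(t*Real.log t - t + 1) := by
  rcases eq_or_lt_of_le ht with h0 | h0
  · rw [← h0]; norm_num
  have hpsi1 : (2*(1:ℝ)+4)*(1*Real.log 1 - 1 + 1) - 3*((1:ℝ)-1)^2 = 0 := by norm_num
  set ψ := fun t : ℝ => (2*t+4)*(t*Real.log t - t + 1) - 3*(t-1)^2 with hψ
  have hcont : ContinuousOn ψ (Set.Ioi 0) := by
    intro x hx
    exact ((psi_deriv hx).differentiableAt.continuousAt).continuousWithinAt
  rcases le_total 1 t with h1 | h1
  · -- t ≥ 1 : ψ monotone on Ici 1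
    have hm : MonotoneOn ψ (Set.Ici 1) := by
      apply monotoneOn_of_deriv_nonneg (convex_Ici 1)
      · exact hcont.mono (fun x hx => show (0:ℝ) < x from lt_of_lt_of_le one_pos hx)
      · rw [interior_Ici]
        exact fun s hs => (psi_deriv (lt_trans one_pos hs)).differentiableAt.differentiableWithinAt
      · rw [interior_Ici]
        intro s hs
        rw [(psi_deriv (lt_trans one_pos hs)).deriv]
        have := g_sign (lt_trans one_pos hs) (le_of_lt hs)
        linarith
    have := hm (Set.mem_Ici.2 le_rfl) (Set.mem_Ici.2 h1) h1
    rw [hψ] at this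
    simp only at this
    nlinarith [this]
  · -- t ≤ 1 : ψ antitone on Ioc 0 1
    have hm : AntitoneOn ψ (Set.Ioc 0 1) := by
      apply antitoneOn_of_deriv_nonpos (convex_Ioc 0 1)
      · exact hcont.mono (fun x hx => hx.1)
      · rw [interior_Ioc]
        exact fun s hs => (psi_deriv hs.1).differentiableAt.differentiableWithinAt
      · rw [interior_Ioc]
        intro s hs
        rw [(psi_deriv hs.1).deriv]
        have := g_sign' hs.1 (le_of_lt hs.2)
        linarith
    have := hm (Set.mem_Ioc.2 ⟨h0, h1⟩) (Set.mem_Ioc.2 ⟨one_pos, le_rfl⟩) h1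
    rw [hψ] at this
    simp only at this
    nlinarith [this]
private lemma key_scaled {ubar : ℝ} (hpos : 0 < ubar) (v : ℝ) (hv : 0 ≤ v) :
    3*(v - ubar)^2 ≤ (2*v + 4*ubar) * (v*Real.log (v/ubar) - v + ubar) := by
  set t := v / ubar with htdef
  have ht : 0 ≤ t := div_nonneg hv hpos.le
  have hvt : v = ubar * t := by rw [htdef]; field_simp
  have hk := mul_le_mul_of_nonneg_left (key t ht) (sq_nonneg ubar)
  rw [hvt]
  have e1 : 3*(ubar*t - ubar)^2 = ubar^2*(3*(t-1)^2) := by ring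
  have e2 : (2*(ubar*t) + 4*ubar)*((ubar*t)*Real.log t - ubar*t + ubar)
      = ubar^2*((2*t+4)*(t*Real.log t - t + 1)) := by ring
  rw [e1, e2]
  exact hk

private lemma amgm {m c d l : ℝ} (hm : 0 ≤ m) (hc : 0 ≤ c) (hd : 0 ≤ d) (hl : 0 < l)
    (h : m^2 ≤ c*d) : m ≤ (l*c + d/l)/2 := by
  have h1 : m ≤ Real.sqrt (c*d) := by
    rw [← Real.sqrt_sq hm]
    exact Real.sqrt_le_sqrt h
  have he : c*d = (l*c)*(d/l) := by field_simp
  have hle : (l*c)*(d/l) ≤ ((l*c + d/l)/2)^2 := by nlinarith [sq_nonneg (l*c - d/l)]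
  have h2 : Real.sqrt (c*d) ≤ (l*c + d/l)/2 := by
    rw [he]
    calc Real.sqrt ((l*c)*(d/l)) ≤ Real.sqrt (((l*c + d/l)/2)^2) := Real.sqrt_le_sqrt hle
      _ = (l*c + d/l)/2 := Real.sqrt_sq (by positivity)
  linarith

theorem stmt_10 {Ω : Type*} [MeasureSpace Ω] (hΩ : (volume : Measure Ω) Set.univ = 1)
    (u : Ω → ℝ) (hu : ∀ x, 0 ≤ u x) (hint : Integrable u)
    (ubar : ℝ) (hubar : ubar = ∫ x, u x) (hpos : 0 < ubar)
    (hent : Integrable (fun x => u x * Real.log (u x / ubar))) :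
    1 / (2 * ubar) * (∫ x, |u x - ubar|) ^ 2 ≤ ∫ x, u x * Real.log (u x / ubar) := by
  haveI : IsProbabilityMeasure (volume : Measure Ω) := ⟨hΩ⟩
  set φ : Ω → ℝ := fun x => u x * Real.log (u x / ubar) - u x + ubar with hφdef
  set E := ∫ x, u x * Real.log (u x / ubar) with hEdef
  set A := ∫ x, |u x - ubar| with hAdef
  have hφx : ∀ x, φ x = u x * Real.log (u x / ubar) - u x + ubar := fun x => rfl
  have hφnn : ∀ x, 0 ≤ φ x := by
    intro x
    rw [hφx]
    have hk := key_scaled hpos (u x) (hu x)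
    have hcpos : (0:ℝ) < 2*u x + 4*ubar := by nlinarith [hu x]
    nlinarith [sq_nonneg (u x - ubar)]
  have hI1 : Integrable (fun x => u x * Real.log (u x / ubar) - u x) := hent.sub hint
  have hφint : Integrable φ := hI1.add (integrable_const _)
  have hEφ : ∫ x, φ x = E := by
    have : ∫ x, φ x = ∫ x, ((u x * Real.log (u x / ubar) - u x) + ubar) := rfl
    rw [this, integral_add hI1 (integrable_const _), integral_sub hent hint, integral_const]
    simp [← hubar, ← hEdef]
  have hE0 : 0 ≤ E := by
    rw [← hEφ]; exact integral_nonneg hφnn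
  have hA0 : 0 ≤ A := integral_nonneg (fun x => abs_nonneg _)
  have hAint : Integrable (fun x => |u x - ubar|) := by
    have : Integrable (fun x => u x - ubar) := hint.sub (integrable_const _)
    exact this.abs
  -- main estimate: for every l > 0, A ≤ l*ubar + E/(2*l)
  have hmain : ∀ l : ℝ, 0 < l → A ≤ l*ubar + E/(2*l) := by
    intro l hl
    have hpt : ∀ x, |u x - ubar| ≤ (l/3*(u x) + 2*l*ubar/3) + φ x/(2*l) := by
      intro x
      have hk := key_scaled hpos (u x) (hu x)
      have hsq : |u x - ubar|^2 ≤ ((2*u x + 4*ubar)/3) * φ x := by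
        rw [sq_abs, hφx]
        nlinarith [hk]
      have hc : (0:ℝ) ≤ (2*u x + 4*ubar)/3 := by nlinarith [hu x]
      have hamgm := amgm (abs_nonneg (u x - ubar)) hc (hφnn x) hl hsq
      calc |u x - ubar| ≤ (l*((2*u x + 4*ubar)/3) + φ x/l)/2 := hamgm
        _ = (l/3*(u x) + 2*l*ubar/3) + φ x/(2*l) := by field_simp; ring
    have hI2 : Integrable (fun x => l/3*(u x) + 2*l*ubar/3) :=
      (hint.const_mul _).add (integrable_const _)
    have hI3 : Integrable (fun x => φ x/(2*l)) := hφint.div_const _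
    have hrint : Integrable (fun x => (l/3*(u x) + 2*l*ubar/3) + φ x/(2*l)) := hI2.add hI3
    have hle : A ≤ ∫ x, ((l/3*(u x) + 2*l*ubar/3) + φ x/(2*l)) :=
      integral_mono hAint hrint hpt
    have hcalc : ∫ x, ((l/3*(u x) + 2*l*ubar/3) + φ x/(2*l))
        = (l/3*(∫ x, u x) + 2*l*ubar/3) + (∫ x, φ x)/(2*l) := by
      rw [integral_add hI2 hI3, integral_add (hint.const_mul _) (integrable_const _),
        integral_const_mul, integral_const]
      have := integral_div (μ := (volume : Measure Ω)) (2*l) φ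
      rw [this]
      simp
    rw [hcalc, ← hubar, hEφ] at hle
    calc A ≤ (l/3*ubar + 2*l*ubar/3) + E/(2*l) := hle
      _ = l*ubar + E/(2*l) := by ring
  -- deduce A^2 ≤ 2*ubar*E
  have hsq : A^2 ≤ 2*ubar*E := by
    by_contra hcon
    push_neg at hcon
    set ε := (A^2 - 2*ubar*E)/2 with hεdef
    have hε : 0 < ε := by simp only [hεdef]; linarith
    set δ := ε/(2*ubar) with hδdef
    have hδ : 0 < δ := by positivity
    set l := Real.sqrt ((E+δ)/(2*ubar)) with hldef
    have hl : 0 < l := Real.sqrt_pos.2 (by positivity)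
    have hl2 : l^2 = (E+δ)/(2*ubar) := Real.sq_sqrt (by positivity)
    have hEδ : E + δ = 2*ubar*l^2 := by
      rw [hl2]; field_simp
    have hdiv : E/(2*l) ≤ (E+δ)/(2*l) := by gcongr; linarith
    have h3 : (E+δ)/(2*l) = ubar*l := by
      rw [hEδ]; field_simp
    have h2 : A ≤ 2*ubar*l := by
      have := hmain l hl
      nlinarith [hdiv, h3]
    have h4 : A^2 ≤ (2*ubar*l)^2 := by nlinarith [hA0]
    have h5 : (2*ubar*l)^2 = 2*ubar*(E+δ) := by rw [hEδ]; ring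
    have hδε : 2*ubar*δ = ε := by rw [hδdef]; field_simp
    nlinarith [h4, h5, hδε, hε]
  -- conclude
  rw [div_mul_eq_mul_div, one_mul, div_le_iff₀ (by positivity : (0:ℝ) < 2*ubar)]
  nlinarith [hsq]
end

section
/- Let Ω have measure 1 and let u, v, w : Ω → [0,∞) be measurable with ∫(γu + αw) = M1 = γa∞ + αc∞ and ∫(γv + βw) = M2 = γb∞ + βc∞, where a∞, b∞, c∞ > 0, a∞^α b∞^β = c∞^γ. Then E(u,v,w) − E(a∞,b∞,c∞) ≥ C·(‖u−a∞‖_{L¹}² + ‖v−b∞‖_{L¹}² + ‖w−c∞‖_{L¹}²) for a constant C = C(M1,M2,α,β,γ) > 0, where E(u,v,w) = ∫(u(ln u −1) + v(ln v −1) + w(ln w −1)). -/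
open MeasureTheory Real

lemma xlogx {x : ℝ} (hx : 0 < x) : x - 1 ≤ x * Real.log x := by
  have h := Real.log_le_sub_one_of_pos (inv_pos.mpr hx)
  rw [Real.log_inv] at h
  have h2 := mul_le_mul_of_nonneg_left h hx.le
  have h3 : x * x⁻¹ = 1 := mul_inv_cancel₀ hx.ne'
  nlinarith [h2, h3]

lemma pointwise_ent (s a : ℝ) (hs : 0 ≤ s) (ha : 0 < a) :
    (Real.sqrt s - Real.sqrt a) ^ 2
      ≤ s * (Real.log s - 1) - a * (Real.log a - 1) - Real.log a * (s - a) := by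
  rcases eq_or_lt_of_le hs with h0 | hs'
  · rw [← h0, Real.sqrt_zero]
    have h2 : Real.sqrt a ^ 2 = a := Real.sq_sqrt ha.le
    simp only [Real.log_zero]
    nlinarith [h2]
  · have hp := Real.sqrt_pos.mpr hs'
    have hq := Real.sqrt_pos.mpr ha
    set p := Real.sqrt s with hpdef
    set q := Real.sqrt a with hqdef
    have hps : p ^ 2 = s := Real.sq_sqrt hs
    have hqs : q ^ 2 = a := Real.sq_sqrt ha.le
    have hlogs : Real.log s = 2 * Real.log p := by
      rw [hpdef, Real.log_sqrt hs]; ring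
    have hloga : Real.log a = 2 * Real.log q := by
      rw [hqdef, Real.log_sqrt ha.le]; ring
    have key := xlogx (div_pos hp hq)
    rw [Real.log_div hp.ne' hq.ne'] at key
    have h2 := mul_le_mul_of_nonneg_left key (by positivity : (0:ℝ) ≤ 2 * p * q)
    have e1 : 2 * p * q * (p / q - 1) = 2 * p * p - 2 * p * q := by
      field_simp
    have e2 : 2 * p * q * (p / q * (Real.log p - Real.log q))
        = 2 * p * p * (Real.log p - Real.log q) := by
      field_simp
    rw [e1, e2] at h2
    rw [hlogs, hloga, ← hps, ← hqs]
    nlinarith [h2]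

lemma aux3 {Ω : Type} [MeasureSpace Ω] [IsProbabilityMeasure (volume : Measure Ω)]
    (u : Ω → ℝ) (a IM : ℝ) (ha : 0 < a) (hu0 : ∀ x, 0 ≤ u x) (hu : Integrable u)
    (hφ : Integrable (fun x => u x * (Real.log (u x) - 1)))
    (hIM : ∫ x, u x ≤ IM) :
    0 ≤ ∫ x, (u x * (Real.log (u x) - 1) - a * (Real.log a - 1) - Real.log a * (u x - a)) ∧
    (∫ x, |u x - a|) ^ 2
      ≤ (2 * IM + 2 * a) *
        ∫ x, (u x * (Real.log (u x) - 1) - a * (Real.log a - 1) - Real.log a * (u x - a)) := by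
  set D : Ω → ℝ := fun x => u x * (Real.log (u x) - 1) - a * (Real.log a - 1) - Real.log a * (u x - a)
    with hD
  have hDpt : ∀ x, (Real.sqrt (u x) - Real.sqrt a) ^ 2 ≤ D x := fun x =>
    pointwise_ent (u x) a (hu0 x) ha
  have hD0 : ∀ x, 0 ≤ D x := fun x => le_trans (sq_nonneg _) (hDpt x)
  have hDint : Integrable D := by
    apply Integrable.sub
    · exact hφ.sub (integrable_const _)
    · exact ((hu.sub (integrable_const a)).const_mul _)
  have hsqrtm : AEStronglyMeasurable (fun x => Real.sqrt (u x)) (volume : Measure Ω) :=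
    Real.continuous_sqrt.comp_aestronglyMeasurable hu.1
  have hsqrt_int : Integrable (fun x => Real.sqrt (u x)) := by
    refine Integrable.mono' ((integrable_const (1:ℝ)).add hu) hsqrtm (ae_of_all _ fun x => ?_)
    simp only [Pi.add_apply]
    rw [Real.norm_of_nonneg (Real.sqrt_nonneg _)]
    nlinarith [Real.sq_sqrt (hu0 x), sq_nonneg (Real.sqrt (u x) - 1)]
  set f : Ω → ℝ := fun x => |Real.sqrt (u x) - Real.sqrt a| with hf
  set g : Ω → ℝ := fun x => Real.sqrt (u x) + Real.sqrt a with hg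
  have hfm : AEStronglyMeasurable f volume := continuous_abs.comp_aestronglyMeasurable (hsqrtm.sub aestronglyMeasurable_const)
  have hgm : AEStronglyMeasurable g volume := hsqrtm.add aestronglyMeasurable_const
  have hfsq : ∀ x, f x ^ 2 = u x - 2 * Real.sqrt a * Real.sqrt (u x) + a := by
    intro x
    rw [hf, sq_abs, sub_sq, Real.sq_sqrt (hu0 x), Real.sq_sqrt ha.le]; ring
  have hgsq : ∀ x, g x ^ 2 = u x + 2 * Real.sqrt a * Real.sqrt (u x) + a := by
    intro x
    rw [hg, add_sq, Real.sq_sqrt (hu0 x), Real.sq_sqrt ha.le]; ring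
  have hfsq_int : Integrable (fun x => f x ^ 2) := by
    have : Integrable (fun x => u x - 2 * Real.sqrt a * Real.sqrt (u x) + a) :=
      (hu.sub (hsqrt_int.const_mul _)).add (integrable_const a)
    exact this.congr (ae_of_all _ fun x => (hfsq x).symm)
  have hgsq_int : Integrable (fun x => g x ^ 2) := by
    have : Integrable (fun x => u x + 2 * Real.sqrt a * Real.sqrt (u x) + a) :=
      (hu.add (hsqrt_int.const_mul _)).add (integrable_const a)
    exact this.congr (ae_of_all _ fun x => (hgsq x).symm)
  have hAle : ∫ x, f x ^ 2 ≤ ∫ x, D x := by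
    refine integral_mono hfsq_int hDint fun x => ?_
    rw [hfsq x]
    have := hDpt x
    nlinarith [this, Real.sq_sqrt (hu0 x), Real.sq_sqrt ha.le, hfsq x]
  have hBle : ∫ x, g x ^ 2 ≤ 2 * IM + 2 * a := by
    have h1 : ∫ x, g x ^ 2 ≤ ∫ x, (2 * u x + 2 * a) := by
      refine integral_mono hgsq_int ((hu.const_mul 2).add (integrable_const _)) fun x => ?_
      rw [hgsq x]
      nlinarith [sq_nonneg (Real.sqrt (u x) - Real.sqrt a), Real.sq_sqrt (hu0 x),
        Real.sq_sqrt ha.le]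
    have h2 : (∫ x, (2 * u x + 2 * a)) = 2 * (∫ x, u x) + 2 * a := by
      rw [integral_add (hu.const_mul 2) (integrable_const _), integral_const_mul,
        integral_const]
      simp
    linarith [h1, h2.le, hIM]
  have hA0 : (0:ℝ) ≤ ∫ x, f x ^ 2 := integral_nonneg fun x => sq_nonneg _
  have hB0 : (0:ℝ) ≤ ∫ x, g x ^ 2 := integral_nonneg fun x => sq_nonneg _
  have hDI0 : (0:ℝ) ≤ ∫ x, D x := integral_nonneg hD0
  constructor
  · exact hDI0
  -- Cauchy-Schwarz
  have hconj : Real.HolderConjugate 2 2 := Real.holderConjugate_iff.mpr ⟨one_lt_two, by norm_num⟩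
  have hfmem : MemLp f (ENNReal.ofReal 2) volume := by
    rw [show ENNReal.ofReal 2 = 2 by norm_num]
    exact (memLp_two_iff_integrable_sq hfm).mpr hfsq_int
  have hgmem : MemLp g (ENNReal.ofReal 2) volume := by
    rw [show ENNReal.ofReal 2 = 2 by norm_num]
    exact (memLp_two_iff_integrable_sq hgm).mpr hgsq_int
  have hCS := MeasureTheory.integral_mul_le_Lp_mul_Lq_of_nonneg hconj
    (ae_of_all _ fun x => abs_nonneg _) (ae_of_all _ fun x => by positivity) hfmem hgmem
  have habs : ∀ x, |u x - a| = f x * g x := by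
    intro x
    show |u x - a| = |Real.sqrt (u x) - Real.sqrt a| * (Real.sqrt (u x) + Real.sqrt a)
    rw [← abs_of_nonneg (show (0:ℝ) ≤ Real.sqrt (u x) + Real.sqrt a by positivity),
      ← abs_mul]
    congr 1
    nlinarith [Real.sq_sqrt (hu0 x), Real.sq_sqrt ha.le]
  have hXeq : ∫ x, |u x - a| = ∫ x, f x * g x := by
    exact integral_congr_ae (ae_of_all _ habs)
  have hrw : ∀ h : Ω → ℝ, (∫ x, h x ^ (2:ℝ)) = ∫ x, h x ^ 2 := by
    intro h
    refine integral_congr_ae (ae_of_all _ fun x => ?_)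
    show h x ^ (2:ℝ) = h x ^ 2
    rw [show (2:ℝ) = ((2:ℕ):ℝ) by norm_num, Real.rpow_natCast]
  rw [hrw f, hrw g] at hCS
  have hX : ∫ x, |u x - a| ≤ (∫ x, f x ^ 2) ^ ((1:ℝ)/2) * (∫ x, g x ^ 2) ^ ((1:ℝ)/2) := by
    rw [hXeq]; exact hCS
  have hsq1 : (∫ x, f x ^ 2) ^ ((1:ℝ)/2) = Real.sqrt (∫ x, f x ^ 2) := by
    rw [Real.sqrt_eq_rpow]
  have hsq2 : (∫ x, g x ^ 2) ^ ((1:ℝ)/2) = Real.sqrt (∫ x, g x ^ 2) := by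
    rw [Real.sqrt_eq_rpow]
  rw [hsq1, hsq2] at hX
  have hX0 : (0:ℝ) ≤ ∫ x, |u x - a| := integral_nonneg fun x => abs_nonneg _
  have hfinal : (∫ x, |u x - a|) ^ 2 ≤ (∫ x, f x ^ 2) * (∫ x, g x ^ 2) := by
    nlinarith [hX, hX0, Real.sq_sqrt hA0, Real.sq_sqrt hB0, Real.sqrt_nonneg (∫ x, f x ^ 2),
      Real.sqrt_nonneg (∫ x, g x ^ 2)]
  have hIM0 : (0:ℝ) ≤ IM := le_trans (integral_nonneg fun x => hu0 x) hIM
  calc (∫ x, |u x - a|) ^ 2 ≤ (∫ x, f x ^ 2) * (∫ x, g x ^ 2) := hfinal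
    _ ≤ (∫ x, D x) * (2 * IM + 2 * a) := by
        apply mul_le_mul hAle hBle hB0 hDI0
    _ = (2 * IM + 2 * a) * ∫ x, D x := mul_comm _ _

theorem stmt_11 (α β γ M1 M2 ainf binf cinf : ℝ)
    (hα : 1 ≤ α) (hβ : 1 ≤ β) (hγ : 1 ≤ γ) (hM1 : 0 < M1) (hM2 : 0 < M2)
    (ha : 0 < ainf) (hb : 0 < binf) (hc : 0 < cinf)
    (heq : ainf ^ α * binf ^ β = cinf ^ γ)
    (hm1 : γ * ainf + α * cinf = M1) (hm2 : γ * binf + β * cinf = M2) :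
    ∃ C : ℝ, 0 < C ∧
      ∀ {Ω : Type} [MeasureSpace Ω], (volume : Measure Ω) Set.univ = 1 →
      ∀ u v w : Ω → ℝ, (∀ x, 0 ≤ u x) → (∀ x, 0 ≤ v x) → (∀ x, 0 ≤ w x) →
      Integrable u → Integrable v → Integrable w →
      Integrable (fun x => u x * (Real.log (u x) - 1)) →
      Integrable (fun x => v x * (Real.log (v x) - 1)) →
      Integrable (fun x => w x * (Real.log (w x) - 1)) →
      (∫ x, (γ * u x + α * w x)) = M1 → (∫ x, (γ * v x + β * w x)) = M2 →
      C * ((∫ x, |u x - ainf|) ^ 2 + (∫ x, |v x - binf|) ^ 2 + (∫ x, |w x - cinf|) ^ 2)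
        ≤ (∫ x, (u x * (Real.log (u x) - 1) + v x * (Real.log (v x) - 1)
              + w x * (Real.log (w x) - 1)))
          - (ainf * (Real.log ainf - 1) + binf * (Real.log binf - 1)
              + cinf * (Real.log cinf - 1)) := by
  have hα0 : (0:ℝ) < α := lt_of_lt_of_le one_pos hα
  have hβ0 : (0:ℝ) < β := lt_of_lt_of_le one_pos hβ
  have hγ0 : (0:ℝ) < γ := lt_of_lt_of_le one_pos hγ
  set Ka := 2 * M1 + 2 * ainf with hKa
  set Kb := 2 * M2 + 2 * binf with hKb
  set Kc := 2 * M1 + 2 * cinf with hKc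
  have hKa0 : 0 < Ka := by positivity
  have hKb0 : 0 < Kb := by positivity
  have hKc0 : 0 < Kc := by positivity
  refine ⟨(Ka + Kb + Kc)⁻¹, by positivity, ?_⟩
  intro Ω _ h1 u v w hu0 hv0 hw0 hu hv hw hφu hφv hφw hint1 hint2
  haveI : IsProbabilityMeasure (volume : Measure Ω) := ⟨h1⟩
  -- mass bounds
  have hIu0 : (0:ℝ) ≤ ∫ x, u x := integral_nonneg hu0
  have hIv0 : (0:ℝ) ≤ ∫ x, v x := integral_nonneg hv0
  have hIw0 : (0:ℝ) ≤ ∫ x, w x := integral_nonneg hw0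
  have hsplit1 : γ * (∫ x, u x) + α * (∫ x, w x) = M1 := by
    rw [← hint1, integral_add (hu.const_mul γ) (hw.const_mul α), integral_const_mul,
      integral_const_mul]
  have hsplit2 : γ * (∫ x, v x) + β * (∫ x, w x) = M2 := by
    rw [← hint2, integral_add (hv.const_mul γ) (hw.const_mul β), integral_const_mul,
      integral_const_mul]
  have hIu : ∫ x, u x ≤ M1 := by nlinarith [mul_nonneg hα0.le hIw0]
  have hIv : ∫ x, v x ≤ M2 := by nlinarith [mul_nonneg hβ0.le hIw0]
  have hIw : ∫ x, w x ≤ M1 := by nlinarith [mul_nonneg hγ0.le hIu0]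
  obtain ⟨hDu0, hXu⟩ := aux3 u ainf M1 ha hu0 hu hφu hIu
  obtain ⟨hDv0, hXv⟩ := aux3 v binf M2 hb hv0 hv hφv hIv
  obtain ⟨hDw0, hXw⟩ := aux3 w cinf M1 hc hw0 hw hφw hIw
  -- the entropy difference equals the sum of the three relative entropies
  have hlog : α * Real.log ainf + β * Real.log binf = γ * Real.log cinf := by
    have := congrArg Real.log heq
    rwa [Real.log_mul (by positivity) (by positivity), Real.log_rpow ha,
      Real.log_rpow hb, Real.log_rpow hc] at this
  have hzero : Real.log ainf * ((∫ x, u x) - ainf) + Real.log binf * ((∫ x, v x) - binf)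
      + Real.log cinf * ((∫ x, w x) - cinf) = 0 := by
    have hA : γ * ((∫ x, u x) - ainf) + α * ((∫ x, w x) - cinf) = 0 := by
      linear_combination hsplit1 - hm1
    have hB : γ * ((∫ x, v x) - binf) + β * ((∫ x, w x) - cinf) = 0 := by
      linear_combination hsplit2 - hm2
    have hγmul : γ * (Real.log ainf * ((∫ x, u x) - ainf)
        + Real.log binf * ((∫ x, v x) - binf)
        + Real.log cinf * ((∫ x, w x) - cinf)) = 0 := by
      linear_combination (Real.log ainf) * hA + (Real.log binf) * hB
        - (((∫ x, w x) - cinf)) * hlog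
    rcases mul_eq_zero.mp hγmul with h | h
    · exact absurd h hγ0.ne'
    · exact h
  have hDu : (∫ x, (u x * (Real.log (u x) - 1) - ainf * (Real.log ainf - 1)
        - Real.log ainf * (u x - ainf)))
      = (∫ x, u x * (Real.log (u x) - 1)) - ainf * (Real.log ainf - 1)
        - Real.log ainf * ((∫ x, u x) - ainf) := by
    have i1 : Integrable (fun x => u x * (Real.log (u x) - 1) - ainf * (Real.log ainf - 1)) :=
      hφu.sub (integrable_const _)
    have i2 : Integrable (fun x => Real.log ainf * (u x - ainf)) :=
      (hu.sub (integrable_const ainf)).const_mul _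
    have i3 : Integrable (fun x => u x - ainf) := hu.sub (integrable_const ainf)
    rw [integral_sub i1 i2, integral_sub hφu (integrable_const _), integral_const,
      integral_const_mul, integral_sub hu (integrable_const ainf), integral_const]
    simp
  have hDv : (∫ x, (v x * (Real.log (v x) - 1) - binf * (Real.log binf - 1)
        - Real.log binf * (v x - binf)))
      = (∫ x, v x * (Real.log (v x) - 1)) - binf * (Real.log binf - 1)
        - Real.log binf * ((∫ x, v x) - binf) := by
    have i1 : Integrable (fun x => v x * (Real.log (v x) - 1) - binf * (Real.log binf - 1)) :=
      hφv.sub (integrable_const _)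
    have i2 : Integrable (fun x => Real.log binf * (v x - binf)) :=
      (hv.sub (integrable_const binf)).const_mul _
    have i3 : Integrable (fun x => v x - binf) := hv.sub (integrable_const binf)
    rw [integral_sub i1 i2, integral_sub hφv (integrable_const _), integral_const,
      integral_const_mul, integral_sub hv (integrable_const binf), integral_const]
    simp
  have hDw : (∫ x, (w x * (Real.log (w x) - 1) - cinf * (Real.log cinf - 1)
        - Real.log cinf * (w x - cinf)))
      = (∫ x, w x * (Real.log (w x) - 1)) - cinf * (Real.log cinf - 1)
        - Real.log cinf * ((∫ x, w x) - cinf) := by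
    have i1 : Integrable (fun x => w x * (Real.log (w x) - 1) - cinf * (Real.log cinf - 1)) :=
      hφw.sub (integrable_const _)
    have i2 : Integrable (fun x => Real.log cinf * (w x - cinf)) :=
      (hw.sub (integrable_const cinf)).const_mul _
    have i3 : Integrable (fun x => w x - cinf) := hw.sub (integrable_const cinf)
    rw [integral_sub i1 i2, integral_sub hφw (integrable_const _), integral_const,
      integral_const_mul, integral_sub hw (integrable_const cinf), integral_const]
    simp
  have hsum : (∫ x, (u x * (Real.log (u x) - 1) + v x * (Real.log (v x) - 1)
        + w x * (Real.log (w x) - 1)))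
      = (∫ x, u x * (Real.log (u x) - 1)) + (∫ x, v x * (Real.log (v x) - 1))
        + (∫ x, w x * (Real.log (w x) - 1)) := by
    have i4 : Integrable (fun x => u x * (Real.log (u x) - 1) + v x * (Real.log (v x) - 1)) :=
      hφu.add hφv
    rw [integral_add i4 hφw, integral_add hφu hφv]
  -- identify RHS with sum of relative entropies
  have hRHS : (∫ x, (u x * (Real.log (u x) - 1) + v x * (Real.log (v x) - 1)
        + w x * (Real.log (w x) - 1)))
          - (ainf * (Real.log ainf - 1) + binf * (Real.log binf - 1)
              + cinf * (Real.log cinf - 1))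
      = (∫ x, (u x * (Real.log (u x) - 1) - ainf * (Real.log ainf - 1)
          - Real.log ainf * (u x - ainf)))
        + (∫ x, (v x * (Real.log (v x) - 1) - binf * (Real.log binf - 1)
          - Real.log binf * (v x - binf)))
        + (∫ x, (w x * (Real.log (w x) - 1) - cinf * (Real.log cinf - 1)
          - Real.log cinf * (w x - cinf))) := by
    rw [hDu, hDv, hDw, hsum]
    linarith [hzero]
  rw [hRHS]
  -- final combination
  have hCKa : (Ka + Kb + Kc)⁻¹ * Ka ≤ 1 := by
    rw [inv_mul_le_iff₀ (by positivity)]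
    linarith [hKb0, hKc0]
  have hCKb : (Ka + Kb + Kc)⁻¹ * Kb ≤ 1 := by
    rw [inv_mul_le_iff₀ (by positivity)]
    linarith [hKa0, hKc0]
  have hCKc : (Ka + Kb + Kc)⁻¹ * Kc ≤ 1 := by
    rw [inv_mul_le_iff₀ (by positivity)]
    linarith [hKa0, hKb0]
  have hC0 : (0:ℝ) < (Ka + Kb + Kc)⁻¹ := by positivity
  set X := ∫ x, |u x - ainf| with hX
  set Y := ∫ x, |v x - binf| with hY
  set Z := ∫ x, |w x - cinf| with hZ
  set A1 := ∫ x, (u x * (Real.log (u x) - 1) - ainf * (Real.log ainf - 1)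
      - Real.log ainf * (u x - ainf)) with hA1
  set A2 := ∫ x, (v x * (Real.log (v x) - 1) - binf * (Real.log binf - 1)
      - Real.log binf * (v x - binf)) with hA2
  set A3 := ∫ x, (w x * (Real.log (w x) - 1) - cinf * (Real.log cinf - 1)
      - Real.log cinf * (w x - cinf)) with hA3
  calc (Ka + Kb + Kc)⁻¹ * (X ^ 2 + Y ^ 2 + Z ^ 2)
      ≤ (Ka + Kb + Kc)⁻¹ * (Ka * A1 + Kb * A2 + Kc * A3) := by
        exact mul_le_mul_of_nonneg_left (add_le_add (add_le_add hXu hXv) hXw) hC0.le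
    _ = ((Ka + Kb + Kc)⁻¹ * Ka) * A1 + ((Ka + Kb + Kc)⁻¹ * Kb) * A2
        + ((Ka + Kb + Kc)⁻¹ * Kc) * A3 := by ring
    _ ≤ 1 * A1 + 1 * A2 + 1 * A3 :=
        add_le_add (add_le_add (mul_le_mul_of_nonneg_right hCKa hDu0)
          (mul_le_mul_of_nonneg_right hCKb hDv0)) (mul_le_mul_of_nonneg_right hCKc hDw0)
    _ = A1 + A2 + A3 := by ring
end

section
/- Let Ω be a bounded domain of measure 1 in which the Poincaré inequality ‖φ − ∫_Ω φ‖_{L²}² ≤ P(Ω)‖∇φ‖_{L²}² and the Sobolev inequality ‖φ‖_{L^q}² ≤ C₁‖∇φ‖_{L²}² + C₂‖φ‖_{L²}² (1/q = 1/2 − 1/N, N ≥ 3) hold. Then there is a constant L(Ω,N) such that the logarithmic Sobolev inequality ∫_Ω φ² ln(φ²/‖φ‖_{L²}²) dx ≤ L(Ω,N)·‖∇φ‖_{L²}² holds for all φ ∈ H¹(Ω). -/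
open MeasureTheory Real

private lemma aux_log_le {x T : ℝ} (hx : 0 < x) (hT : 0 < T) :
    log x ≤ x / T - 1 + log T := by
  have h := Real.log_le_sub_one_of_pos (show 0 < x / T by positivity)
  rw [Real.log_div (ne_of_gt hx) (ne_of_gt hT)] at h
  linarith

private lemma aux_theta {u : ℝ} (hu : 0 ≤ u) : u * log u - u + 1 ≤ (u - 1) ^ 2 := by
  rcases eq_or_lt_of_le hu with h | h
  · simp [← h]
  · nlinarith [Real.log_le_sub_one_of_pos h]

private lemma aux_mul_log_le_rpow {u a : ℝ} (hu : 0 ≤ u) (ha : 0 < a) :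
    u * log u ≤ u ^ (1 + a) / a := by
  rcases eq_or_lt_of_le hu with h | h
  · rw [← h, Real.zero_rpow (by positivity)]; simp
  · have h1 : log (u ^ a) = a * log u := Real.log_rpow h a
    have h2 := Real.log_le_sub_one_of_pos (Real.rpow_pos_of_pos h a)
    rw [h1] at h2
    have h3 : log u ≤ u ^ a / a := by
      rw [le_div_iff₀ ha, mul_comm]
      linarith [Real.rpow_pos_of_pos h a]
    have h4 : u * log u ≤ u * (u ^ a / a) := by
      exact mul_le_mul_of_nonneg_left h3 hu
    calc u * log u ≤ u * (u ^ a / a) := h4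
      _ = u ^ (1 + a) / a := by
          rw [Real.rpow_add h, Real.rpow_one]; ring

private lemma aux_sq_rpow {y c : ℝ} : ((y ^ 2 : ℝ)) ^ c = |y| ^ (2 * c) := by
  rw [← sq_abs, ← Real.rpow_natCast |y| 2, ← Real.rpow_mul (abs_nonneg y)]
  norm_num

private lemma aux_young {y p : ℝ} (hp : 2 < p) :
    y ^ 2 ≤ (2 / p) * |y| ^ p + (1 - 2 / p) := by
  have hp2 : (1 : ℝ) < p / 2 := by linarith
  have hcon := Real.HolderConjugate.conjExponent hp2
  have h := Real.young_inequality_of_nonneg (sq_nonneg y) zero_le_one hcon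
  have h1 : ((y ^ 2 : ℝ)) ^ (p / 2) = |y| ^ p := by
    rw [aux_sq_rpow]; ring_nf
  rw [Real.one_rpow, h1, mul_one] at h
  have hc : Real.conjExponent (p / 2) = p / (p - 2) := by
    unfold Real.conjExponent
    rw [div_eq_div_iff (by linarith) (by linarith)]
    ring
  rw [hc] at h
  have e1 : |y| ^ p / (p / 2) = (2 / p) * |y| ^ p := by
    field_simp
  have e2 : 1 / (p / (p - 2)) = 1 - 2 / p := by
    field_simp
  rw [e1, e2] at h
  exact h


private lemma aux_jensen_pt {y T p : ℝ} (hT : 0 < T) (hp : 2 < p) :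
    (p / 2 - 1) * (y ^ 2 * log (y ^ 2)) ≤ |y| ^ p / T + y ^ 2 * (log T - 1) := by
  rcases eq_or_ne y 0 with h | h
  · subst h
    simp [Real.zero_rpow (show p ≠ 0 by linarith)]
  · have hy2 : (0 : ℝ) < y ^ 2 := by positivity
    set a : ℝ := p / 2 - 1 with ha
    have ha0 : 0 < a := by rw [ha]; linarith
    -- a * log (y^2) = log ((y^2)^a) ≤ (y^2)^a / T - 1 + log T
    have h1 : a * log (y ^ 2) = log ((y ^ 2 : ℝ) ^ a) := (Real.log_rpow hy2 a).symm
    have h2 := aux_log_le (Real.rpow_pos_of_pos hy2 a) hT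
    rw [← h1] at h2
    have h3 := mul_le_mul_of_nonneg_left h2 hy2.le
    have h4 : y ^ 2 * ((y ^ 2 : ℝ) ^ a / T - 1 + log T) =
        |y| ^ p / T + y ^ 2 * (log T - 1) := by
      have h5 : y ^ 2 * ((y ^ 2 : ℝ) ^ a) = |y| ^ p := by
        rw [aux_sq_rpow, ← sq_abs y, ← Real.rpow_natCast |y| 2,
          ← Real.rpow_add (abs_pos.mpr h)]
        norm_num
        ring_nf
        rw [ha]; ring_nf
      field_simp
      nlinarith [h5]
    calc a * (y ^ 2 * log (y ^ 2)) = y ^ 2 * (a * log (y ^ 2)) := by ring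
      _ ≤ y ^ 2 * ((y ^ 2 : ℝ) ^ a / T - 1 + log T) := h3
      _ = _ := h4

private lemma aux_ptB {p m b y : ℝ} (hp : 2 < p) (hp6 : p ≤ 6) (hm : m ^ 2 = 1 - b)
    (hb : 0 ≤ b) :
    y ^ 2 * log (y ^ 2) - y ^ 2 + 1 ≤
      15 * (y - m) ^ 2 + 3 * b ^ 2 + (64 / (p / 2 - 1) + 1) * |y - m| ^ p := by
  obtain ⟨r, hr⟩ : ∃ r, r = y - m := ⟨y - m, rfl⟩
  rw [← hr]
  have ha0 : 0 < p / 2 - 1 := by linarith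
  have hm1 : m ^ 2 ≤ 1 := by linarith
  have hrp0 : (0 : ℝ) ≤ |r| ^ p := Real.rpow_nonneg (abs_nonneg r) p
  have hC0 : (0 : ℝ) ≤ 64 / (p / 2 - 1) + 1 := by positivity
  rcases le_or_gt (|r|) 1 with hcase | hcase
  · have h1 := aux_theta (sq_nonneg y)
    have hr2 : r ^ 2 ≤ 1 := by nlinarith [sq_abs r, abs_nonneg r]
    have hy : y = m + r := by rw [hr]; ring
    have key : (y ^ 2 - 1) ^ 2 ≤ 15 * r ^ 2 + 3 * b ^ 2 := by
      have hy2 : y ^ 2 - 1 = 2 * m * r + r ^ 2 - b := by rw [hy]; nlinarith [hm]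
      rw [hy2]
      nlinarith [sq_nonneg (2 * m * r - r ^ 2), sq_nonneg (2 * m * r + b),
        sq_nonneg (r ^ 2 + b),
        mul_nonneg (show (0:ℝ) ≤ 1 - m ^ 2 by linarith) (sq_nonneg r),
        mul_nonneg (show (0:ℝ) ≤ 1 - r ^ 2 by linarith) (sq_nonneg r)]
    linarith [mul_nonneg hC0 hrp0]
  · have h1 := aux_mul_log_le_rpow (sq_nonneg y) ha0
    have h2 : ((y ^ 2 : ℝ)) ^ (1 + (p / 2 - 1)) = |y| ^ p := by
      rw [aux_sq_rpow]; ring_nf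
    rw [h2] at h1
    have hmabs : |m| ≤ 1 := by nlinarith [sq_abs m, abs_nonneg m]
    have h3 : |y| ≤ 2 * |r| := by
      calc |y| = |m + r| := by rw [hr]; ring_nf
        _ ≤ |m| + |r| := abs_add_le m r
        _ ≤ 2 * |r| := by linarith
    have h4 : |y| ^ p ≤ (2 * |r|) ^ p :=
      Real.rpow_le_rpow (abs_nonneg y) h3 (by linarith)
    have h5 : ((2 : ℝ) * |r|) ^ p = 2 ^ p * |r| ^ p :=
      Real.mul_rpow (by norm_num) (abs_nonneg r)
    have h6 : (2 : ℝ) ^ p ≤ 64 := by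
      have h := Real.rpow_le_rpow_of_exponent_le (by norm_num : (1 : ℝ) ≤ 2) hp6
      rw [show (6 : ℝ) = ((6 : ℕ) : ℝ) by norm_num, Real.rpow_natCast] at h
      norm_num at h
      exact h
    have h7 : 1 ≤ |r| ^ p := Real.one_le_rpow hcase.le (by linarith)
    have h8 : |y| ^ p ≤ 64 * |r| ^ p := by
      calc |y| ^ p ≤ 2 ^ p * |r| ^ p := by rw [← h5]; exact h4
        _ ≤ 64 * |r| ^ p := by nlinarith
    have h9 : |y| ^ p / (p / 2 - 1) ≤ 64 * |r| ^ p / (p / 2 - 1) :=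
      (div_le_div_iff_of_pos_right ha0).mpr h8
    have h10 : 64 * |r| ^ p / (p / 2 - 1) = 64 / (p / 2 - 1) * |r| ^ p := by ring
    nlinarith [sq_nonneg y, sq_nonneg r, sq_nonneg b]


set_option maxHeartbeats 2000000 in
theorem stmt_18 (N : ℕ) (hN : 3 ≤ N)
    (Ω : Set (EuclideanSpace ℝ (Fin N))) (hΩb : Bornology.IsBounded Ω)
    (hΩm : MeasurableSet Ω) (hvol : volume Ω = 1)
    (q P C₁ C₂ : ℝ) (hq : 1 / q = 1 / 2 - 1 / (N : ℝ)) (hP : 0 < P)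
    (hPoincare : ∀ φ : EuclideanSpace ℝ (Fin N) → ℝ, ContDiff ℝ 1 φ →
      (∫ x in Ω, (φ x - ∫ y in Ω, φ y) ^ 2) ≤ P * ∫ x in Ω, ‖fderiv ℝ φ x‖ ^ 2)
    (hSobolev : ∀ φ : EuclideanSpace ℝ (Fin N) → ℝ, ContDiff ℝ 1 φ →
      (∫ x in Ω, |φ x| ^ q) ^ (2 / q) ≤
        C₁ * (∫ x in Ω, ‖fderiv ℝ φ x‖ ^ 2) + C₂ * ∫ x in Ω, (φ x) ^ 2) :
    ∃ L : ℝ, 0 < L ∧ ∀ φ : EuclideanSpace ℝ (Fin N) → ℝ, ContDiff ℝ 1 φ →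
      (∫ x in Ω, (φ x) ^ 2 * Real.log ((φ x) ^ 2 / ∫ y in Ω, (φ y) ^ 2)) ≤
        L * ∫ x in Ω, ‖fderiv ℝ φ x‖ ^ 2 := by
  -- basic facts about q
  have hN3 : (3 : ℝ) ≤ (N : ℝ) := by exact_mod_cast hN
  have hNpos : (0 : ℝ) < (N : ℝ) := by linarith
  have h16 : (1 : ℝ) / 6 ≤ 1 / q := by
    rw [hq]
    have : 1 / (N : ℝ) ≤ 1 / 3 := by
      rw [div_le_div_iff₀ hNpos (by norm_num)]; linarith
    linarith
  have hq0 : 0 < q := by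
    by_contra h
    push_neg at h
    have : 1 / q ≤ 0 := div_nonpos_of_nonneg_of_nonpos zero_le_one h
    linarith
  have hq6 : q ≤ 6 := by
    have h1 : q * (1 / 6) ≤ q * (1 / q) := by
      exact mul_le_mul_of_nonneg_left h16 hq0.le
    rw [mul_one_div_cancel (ne_of_gt hq0)] at h1
    linarith
  have hq2 : 2 < q := by
    have hlt : 1 / q < 1 / 2 := by
      rw [hq]
      have : 0 < 1 / (N : ℝ) := by positivity
      linarith
    have h1 : q * (1 / q) < q * (1 / 2) := by
      exact mul_lt_mul_of_pos_left hlt hq0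
    rw [mul_one_div_cancel (ne_of_gt hq0)] at h1
    linarith
  -- integrability of continuous functions on Ω
  have hint : ∀ f : EuclideanSpace ℝ (Fin N) → ℝ, Continuous f →
      IntegrableOn f Ω volume := by
    intro f hf
    exact ((hf.continuousOn).integrableOn_compact hΩb.isCompact_closure).mono_set
      subset_closure
  -- C₂ ≥ 1
  have hC2 : 1 ≤ C₂ := by
    have h := hSobolev (fun _ => 1) contDiff_const
    simp [hvol, fderiv_const] at h
    rw [measureReal_def, hvol] at h; simp at h
    linarith
  have hC2' : 0 < C₂ := by linarith
  -- constants
  have hα : 0 < q / 2 - 1 := by linarith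
  set K : ℝ := max C₁ 0 + C₂ * P with hKdef
  have hK : 0 < K := add_pos_of_nonneg_of_pos (le_max_right C₁ 0) (mul_pos hC2' hP)
  set A : ℝ := 18 * P + (64 / (q / 2 - 1) + 1) * K with hAdef
  have hA : 0 < A := by positivity
  set B : ℝ := (q / (2 * (q / 2 - 1))) * (max C₁ 0 / C₂ + K * Real.log C₂) with hBdef
  have hB : 0 ≤ B := by
    apply mul_nonneg (by positivity)
    exact add_nonneg (div_nonneg (le_max_right C₁ 0) hC2'.le)
      (mul_nonneg hK.le (Real.log_nonneg hC2))
  set L : ℝ := A + B + 1 with hLdef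
  have hL : 0 < L := by positivity
  clear_value K A B L
  -- the key normalized inequality
  have key : ∀ g : EuclideanSpace ℝ (Fin N) → ℝ, ContDiff ℝ 1 g →
      (∫ x in Ω, (g x) ^ 2) = 1 →
      (∫ x in Ω, (g x) ^ 2 * Real.log ((g x) ^ 2)) ≤
        L * ∫ x in Ω, ‖fderiv ℝ g x‖ ^ 2 := by
    intro g hg hI
    have hgc : Continuous g := hg.continuous
    set G : ℝ := ∫ x in Ω, ‖fderiv ℝ g x‖ ^ 2 with hGdef
    have hG0 : 0 ≤ G := setIntegral_nonneg hΩm fun x _ => sq_nonneg _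
    set Ent : ℝ := ∫ x in Ω, (g x) ^ 2 * Real.log ((g x) ^ 2) with hEntdef
    clear_value G Ent
    have i_g : IntegrableOn g Ω volume := hint g hgc
    have i_g2 : IntegrableOn (fun x => (g x) ^ 2) Ω volume := hint _ (hgc.pow 2)
    have i_ent : IntegrableOn (fun x => (g x) ^ 2 * Real.log ((g x) ^ 2)) Ω volume :=
      hint _ (Real.continuous_mul_log.comp (hgc.pow 2))
    have i_q : IntegrableOn (fun x => |g x| ^ q) Ω volume :=
      hint _ (hgc.abs.rpow_const fun x => Or.inr hq0.le)
    have i_const : ∀ c : ℝ, IntegrableOn (fun _ => c) Ω volume :=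
      fun c => hint _ continuous_const
    rcases le_or_gt 1 (K * G) with hcase | hcase
    · -- case A : 1 ≤ K * G, use Sobolev + Jensen
      set X : ℝ := ∫ x in Ω, |g x| ^ q with hXdef
      clear_value X
      have hX1 : 1 ≤ X := by
        have hmono : (∫ x in Ω, (g x) ^ 2) ≤
            ∫ x in Ω, ((2 / q) * |g x| ^ q + (1 - 2 / q)) :=
          setIntegral_mono_on i_g2
            (by exact (i_q.const_mul (2 / q)).add (i_const (1 - 2 / q))) hΩm
            (fun x _ => aux_young hq2)
        have hcal : (∫ x in Ω, ((2 / q) * |g x| ^ q + (1 - 2 / q))) =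
            (2 / q) * X + (1 - 2 / q) := by
          rw [integral_add (by exact i_q.const_mul _) (i_const _), integral_const_mul,
            setIntegral_const, measureReal_def, hvol, ← hXdef]
          simp
        rw [hI, hcal] at hmono
        by_contra hcon
        push_neg at hcon
        have h2q : (0 : ℝ) < 2 / q := by positivity
        have := mul_lt_mul_of_pos_left hcon h2q
        linarith
      have hX0 : 0 < X := lt_of_lt_of_le one_pos hX1
      have hEnt1 : (q / 2 - 1) * Ent ≤ Real.log X := by
        have hmono : (∫ x in Ω, (q / 2 - 1) * ((g x) ^ 2 * Real.log ((g x) ^ 2))) ≤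
            ∫ x in Ω, (|g x| ^ q / X + (g x) ^ 2 * (Real.log X - 1)) :=
          setIntegral_mono_on (by exact i_ent.const_mul (q / 2 - 1))
            (by exact (i_q.div_const X).add (i_g2.mul_const (Real.log X - 1))) hΩm
            (fun x _ => aux_jensen_pt hX0 hq2 (y := g x))
        rw [integral_const_mul,
          integral_add (i_q.div_const X) (i_g2.mul_const _), integral_div,
          integral_mul_const, hI] at hmono
        rw [← hXdef, ← hEntdef, div_self (ne_of_gt hX0), one_mul] at hmono
        linarith
      have hS := hSobolev g hg
      rw [hI, mul_one, ← hXdef, ← hGdef] at hS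
      have hXr1 : (1 : ℝ) ≤ X ^ (2 / q) := Real.one_le_rpow hX1 (by positivity)
      have hpos : 0 < C₁ * G + C₂ := lt_of_lt_of_le (lt_of_lt_of_le one_pos hXr1) hS
      have hlog1 : Real.log (X ^ (2 / q)) ≤ Real.log (C₁ * G + C₂) :=
        (Real.log_le_log_iff (by linarith) hpos).mpr hS
      have hlogX : Real.log (X ^ (2 / q)) = (2 / q) * Real.log X :=
        Real.log_rpow hX0 _
      have hlog2 : Real.log (C₁ * G + C₂) ≤ (C₁ * G + C₂) / C₂ - 1 + Real.log C₂ :=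
        aux_log_le hpos hC2'
      have e1 : (C₁ * G + C₂) / C₂ - 1 = C₁ * G / C₂ := by field_simp; ring
      have hlogXle : Real.log X ≤ (q / 2) * (C₁ * G / C₂ + Real.log C₂) := by
        have h2 : Real.log X = (q / 2) * Real.log (X ^ (2 / q)) := by
          rw [hlogX]; field_simp
        rw [h2]
        apply mul_le_mul_of_nonneg_left _ (by positivity)
        linarith
      have hstep : (q / 2) * (C₁ * G / C₂ + Real.log C₂) ≤ (q / 2 - 1) * (B * G) := by
        have h3 : C₁ * G ≤ max C₁ 0 * G :=
          mul_le_mul_of_nonneg_right (le_max_left C₁ 0) hG0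
        have h4 : Real.log C₂ ≤ Real.log C₂ * (K * G) :=
          le_mul_of_one_le_right (Real.log_nonneg hC2) hcase
        have h5₀ : ∀ S : ℝ, (q / 2 - 1) * (q / (2 * (q / 2 - 1)) * S) = (q / 2) * S := by
          intro S
          have hne2 : (-4 + q * 2 : ℝ) ≠ 0 := by intro h; linarith
          have hne : q / 2 - 1 ≠ 0 := hα.ne'
          rw [← mul_assoc, mul_div_assoc', mul_comm (q / 2 - 1) q, mul_div_mul_right _ _ hne]
        have h5 : (q / 2 - 1) * (B * G) =
            (q / 2) * (max C₁ 0 * G / C₂ + Real.log C₂ * (K * G)) := by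
          have e : (q / 2 - 1) * (B * G) =
              (q / 2 - 1) * (q / (2 * (q / 2 - 1)) *
                (((max C₁ 0) / C₂ + K * Real.log C₂) * G)) := by
            rw [hBdef]; ring
          rw [e, h5₀]
          ring
        rw [h5]
        apply mul_le_mul_of_nonneg_left _ (by positivity)
        have h6 : C₁ * G / C₂ ≤ max C₁ 0 * G / C₂ := (div_le_div_iff_of_pos_right hC2').mpr h3
        linarith
      have hEB : Ent ≤ B * G := by
        have := le_trans hEnt1 (le_trans hlogXle hstep)
        exact le_of_mul_le_mul_left (by linarith) hα
      have : B * G ≤ L * G := by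
        apply mul_le_mul_of_nonneg_right _ hG0
        rw [hLdef]; linarith
      linarith
    · -- case B : K * G ≤ 1
      set m : ℝ := ∫ y in Ω, g y with hmdef
      have hPg := hPoincare g hg
      rw [← hmdef, ← hGdef] at hPg
      set b : ℝ := ∫ x in Ω, (g x - m) ^ 2 with hbdef
      have hb0 : 0 ≤ b :=
        hbdef ▸ setIntegral_nonneg hΩm fun x _ => sq_nonneg _
      have i_h2 : IntegrableOn (fun x => (g x - m) ^ 2) Ω volume :=
        hint _ ((hgc.sub continuous_const).pow 2)
      have i_hq : IntegrableOn (fun x => |g x - m| ^ q) Ω volume :=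
        hint _ ((hgc.sub continuous_const).abs.rpow_const fun x => Or.inr hq0.le)
      -- b = 1 - m ^ 2
      have hbm : b = 1 - m ^ 2 := by
        have e0 : (∫ x in Ω, (g x - m) ^ 2) =
            ∫ x in Ω, ((g x) ^ 2 - (2 * m) * g x + m ^ 2) := by
          apply integral_congr_ae
          filter_upwards with x
          ring
        have e1 : (∫ x in Ω, ((g x) ^ 2 - (2 * m) * g x + m ^ 2)) =
            ((∫ x in Ω, (g x) ^ 2) - (2 * m) * (∫ x in Ω, g x)) + m ^ 2 := by
          rw [integral_add (by exact i_g2.sub (i_g.const_mul (2 * m))) (i_const _),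
            integral_sub i_g2 (by exact i_g.const_mul (2 * m)), integral_const_mul,
            setIntegral_const, measureReal_def, hvol]
          simp
        rw [hbdef, e0, e1, hI, ← hmdef]
        ring
      have hm2 : m ^ 2 = 1 - b := by linarith
      have hb1 : b ≤ 1 := by nlinarith [sq_nonneg m]
      -- Sobolev applied to g - m
      have hhC : ContDiff ℝ 1 (fun x => g x - m) := hg.sub contDiff_const
      have hSh := hSobolev (fun x => g x - m) hhC
      simp only [fderiv_sub_const] at hSh
      rw [← hGdef, ← hbdef] at hSh
      set Y : ℝ := ∫ x in Ω, |g x - m| ^ q with hYdef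
      have hY0 : 0 ≤ Y :=
        hYdef ▸ setIntegral_nonneg hΩm fun x _ => Real.rpow_nonneg (abs_nonneg _) q
      clear_value Y
      have hKG0 : 0 ≤ K * G := mul_nonneg hK.le hG0
      have hYKG : Y ^ (2 / q) ≤ K * G := by
        refine le_trans hSh ?_
        have h1 : C₁ * G ≤ max C₁ 0 * G :=
          mul_le_mul_of_nonneg_right (le_max_left C₁ 0) hG0
        have h2 : C₂ * b ≤ C₂ * (P * G) := mul_le_mul_of_nonneg_left hPg hC2'.le
        rw [hKdef]
        nlinarith
      have hYle : Y ≤ K * G := by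
        have hid : ((Y ^ (2 / q) : ℝ)) ^ (q / 2) = Y := by
          rw [← Real.rpow_mul hY0, show (2 / q) * (q / 2) = 1 by field_simp,
            Real.rpow_one]
        calc Y = ((Y ^ (2 / q) : ℝ)) ^ (q / 2) := hid.symm
          _ ≤ (K * G) ^ (q / 2) :=
              Real.rpow_le_rpow (Real.rpow_nonneg hY0 _) hYKG (by positivity)
          _ ≤ K * G := by
              rcases eq_or_lt_of_le hKG0 with h0 | h0
              · rw [← h0, Real.zero_rpow (by positivity)]
              · calc (K * G) ^ (q / 2) ≤ (K * G) ^ (1 : ℝ) :=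
                    Real.rpow_le_rpow_of_exponent_ge h0 hcase.le (by linarith)
                  _ = K * G := Real.rpow_one _
      -- entropy bound
      have iL : IntegrableOn
          (fun x => (g x) ^ 2 * Real.log ((g x) ^ 2) - (g x) ^ 2 + 1) Ω volume := by
        exact (i_ent.sub i_g2).add (i_const 1)
      have iR : IntegrableOn (fun x => 15 * (g x - m) ^ 2 + 3 * b ^ 2 +
          (64 / (q / 2 - 1) + 1) * |g x - m| ^ q) Ω volume := by
        exact ((i_h2.const_mul 15).add (i_const (3 * b ^ 2))).add
          (i_hq.const_mul (64 / (q / 2 - 1) + 1))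
      have hmono : (∫ x in Ω, ((g x) ^ 2 * Real.log ((g x) ^ 2) - (g x) ^ 2 + 1)) ≤
          ∫ x in Ω, (15 * (g x - m) ^ 2 + 3 * b ^ 2 +
            (64 / (q / 2 - 1) + 1) * |g x - m| ^ q) :=
        setIntegral_mono_on iL iR hΩm (fun x _ => aux_ptB hq2 hq6 hm2 hb0)
      have hLHS : (∫ x in Ω, ((g x) ^ 2 * Real.log ((g x) ^ 2) - (g x) ^ 2 + 1)) =
          Ent := by
        rw [integral_add (by exact i_ent.sub i_g2) (i_const 1),
          integral_sub i_ent i_g2, hI, setIntegral_const, measureReal_def, hvol, ← hEntdef]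
        simp
      have hRHS : (∫ x in Ω, (15 * (g x - m) ^ 2 + 3 * b ^ 2 +
          (64 / (q / 2 - 1) + 1) * |g x - m| ^ q)) =
          15 * b + 3 * b ^ 2 + (64 / (q / 2 - 1) + 1) * Y := by
        rw [integral_add (by exact (i_h2.const_mul 15).add (i_const (3 * b ^ 2)))
            (by exact i_hq.const_mul _),
          integral_add (by exact i_h2.const_mul 15) (i_const _)]
        rw [integral_const_mul, ← hbdef]
        rw [setIntegral_const, measureReal_def, hvol]
        rw [integral_const_mul, ← hYdef]
        simp
      rw [hLHS, hRHS] at hmono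
      have hb2 : b ^ 2 ≤ b := by nlinarith
      have hCq0 : 0 < 64 / (q / 2 - 1) + 1 := by positivity
      have hfin : Ent ≤ A * G := by
        have h1 : 15 * b ≤ 15 * (P * G) := by linarith
        have h2 : 3 * b ^ 2 ≤ 3 * (P * G) := by linarith
        have h3 : (64 / (q / 2 - 1) + 1) * Y ≤ (64 / (q / 2 - 1) + 1) * (K * G) :=
          mul_le_mul_of_nonneg_left hYle hCq0.le
        rw [hAdef]
        linarith
      have : A * G ≤ L * G := by
        apply mul_le_mul_of_nonneg_right _ hG0
        rw [hLdef]; linarith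
      linarith
  refine ⟨L, hL, ?_⟩
  intro φ hφ
  have hgrad0 : 0 ≤ ∫ x in Ω, ‖fderiv ℝ φ x‖ ^ 2 :=
    setIntegral_nonneg hΩm fun x _ => sq_nonneg _
  have ht0 : 0 ≤ ∫ y in Ω, (φ y) ^ 2 :=
    setIntegral_nonneg hΩm fun x _ => sq_nonneg _
  rcases ht0.eq_or_lt with ht | ht
  · simp only [← ht, div_zero, Real.log_zero, mul_zero, integral_zero]
    exact mul_nonneg hL.le hgrad0
  · set t : ℝ := ∫ y in Ω, (φ y) ^ 2 with htdef
    have htne : t ≠ 0 := ne_of_gt ht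
    set c : ℝ := (Real.sqrt t)⁻¹ with hcdef
    have hsq : Real.sqrt t > 0 := Real.sqrt_pos.mpr ht
    have hc : 0 < c := by positivity
    have hc2 : c ^ 2 = t⁻¹ := by
      rw [hcdef, ← Real.sqrt_inv, Real.sq_sqrt (by positivity)]
    set g : EuclideanSpace ℝ (Fin N) → ℝ := fun x => c * φ x with hgdef
    have hgC : ContDiff ℝ 1 g := contDiff_const.mul hφ
    have hgsq : ∀ x, (g x) ^ 2 = t⁻¹ * (φ x) ^ 2 := by
      intro x; rw [hgdef]; simp only; rw [mul_pow, hc2]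
    have hfd : ∀ x, ‖fderiv ℝ g x‖ ^ 2 = t⁻¹ * ‖fderiv ℝ φ x‖ ^ 2 := by
      intro x
      rw [hgdef]
      rw [fderiv_const_mul (hφ.differentiable one_ne_zero x) c]
      rw [norm_smul]
      simp [mul_pow, ← hc2, abs_of_pos hc]
    have hIg : (∫ x in Ω, (g x) ^ 2) = 1 := by
      simp only [hgsq]
      rw [integral_const_mul, ← htdef, inv_mul_cancel₀ htne]
    have hGg : (∫ x in Ω, ‖fderiv ℝ g x‖ ^ 2) =
        t⁻¹ * ∫ x in Ω, ‖fderiv ℝ φ x‖ ^ 2 := by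
      simp only [hfd]
      rw [integral_const_mul]
    have hkey := key g hgC hIg
    rw [hGg] at hkey
    have hpt : ∀ x, (φ x) ^ 2 * Real.log ((φ x) ^ 2 / t) =
        t * ((g x) ^ 2 * Real.log ((g x) ^ 2)) := by
      intro x
      rw [hgsq x]
      rw [inv_mul_eq_div]
      field_simp
    calc (∫ x in Ω, (φ x) ^ 2 * Real.log ((φ x) ^ 2 / t))
        = ∫ x in Ω, t * ((g x) ^ 2 * Real.log ((g x) ^ 2)) := by
          simp only [hpt]
      _ = t * ∫ x in Ω, (g x) ^ 2 * Real.log ((g x) ^ 2) := integral_const_mul _ _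
      _ ≤ t * (L * (t⁻¹ * ∫ x in Ω, ‖fderiv ℝ φ x‖ ^ 2)) :=
          mul_le_mul_of_nonneg_left hkey ht.le
      _ = L * ∫ x in Ω, ‖fderiv ℝ φ x‖ ^ 2 := by
          field_simp
end
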